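/- Let α ∈ [0, 1). There exists a probability density on [0, ∞) of the form f(x) = c_α exp(−c_α α x − x²/2) for x ≥ 0 (and 0 for x < 0), where c_α > 0 is the unique constant making f integrate to 1. Moreover, the mean of this distribution equals c_α (1 − α); that is, ∫_0^∞ x c_α exp(−c_α α x − x²/2) dx = c_α(1 − α). -/

import Mathlib

open Set MeasureTheory Filter Topology

namespace SSPDaux

lemma int_exp (a b : ℝ) (ha : 0 ≤ a) (hb : 0 < b) :
    IntegrableOn (fun x : ℝ => Real.exp (-(a * x) - x ^ 2 / b)) (Ioi 0) := by
  refine ((integrable_exp_neg_mul_sq (show (0:ℝ) < b⁻¹ by positivity)).integrableOn).mono'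
    (Continuous.aestronglyMeasurable (by fun_prop)) ?_
  filter_upwards [ae_restrict_mem measurableSet_Ioi] with x hx
  rw [Real.norm_eq_abs, abs_of_nonneg (Real.exp_pos _).le]
  apply Real.exp_le_exp.2
  have h1 : 0 ≤ a * x := mul_nonneg ha (le_of_lt hx)
  have h2 : x ^ 2 / b = b⁻¹ * x ^ 2 := by ring
  linarith [h2.ge]

lemma int_xexp (a b : ℝ) (ha : 0 ≤ a) (hb : 0 < b) :
    IntegrableOn (fun x : ℝ => x * Real.exp (-(a * x) - x ^ 2 / b)) (Ioi 0) := by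
  refine ((integrable_mul_exp_neg_mul_sq (show (0:ℝ) < b⁻¹ by positivity)).integrableOn).mono'
    (Continuous.aestronglyMeasurable (by fun_prop)) ?_
  filter_upwards [ae_restrict_mem measurableSet_Ioi] with x hx
  rw [Real.norm_eq_abs, abs_mul, abs_of_pos hx, abs_of_nonneg (Real.exp_pos _).le]
  apply mul_le_mul_of_nonneg_left _ hx.le
  apply Real.exp_le_exp.2
  have h1 : 0 ≤ a * x := mul_nonneg ha (le_of_lt hx)
  have h2 : x ^ 2 / b = b⁻¹ * x ^ 2 := by ring
  linarith [h2.ge]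

lemma subst (α c : ℝ) (hc : 0 < c) :
    (∫ x in Ioi (0:ℝ), c * Real.exp (-(c * α * x) - x ^ 2 / 2)) =
    ∫ u in Ioi (0:ℝ), Real.exp (-(α * u) - u ^ 2 / (2 * c ^ 2)) := by
  have h := integral_comp_mul_left_Ioi
    (fun u => c * Real.exp (-(α * u) - u ^ 2 / (2 * c ^ 2))) 0 hc
  simp only [mul_zero] at h
  calc (∫ x in Ioi (0:ℝ), c * Real.exp (-(c * α * x) - x ^ 2 / 2))
      = ∫ x in Ioi (0:ℝ), c * Real.exp (-(α * (c * x)) - (c * x) ^ 2 / (2 * c ^ 2)) := by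
        refine setIntegral_congr_fun measurableSet_Ioi fun x _ => ?_
        have hc' : c ≠ 0 := hc.ne'
        have h2 : (c * x) ^ 2 / (2 * c ^ 2) = x ^ 2 / 2 := by
          field_simp
        rw [h2, show -(α * (c * x)) = -(c * α * x) by ring]
    _ = c⁻¹ • ∫ u in Ioi (0:ℝ), c * Real.exp (-(α * u) - u ^ 2 / (2 * c ^ 2)) := h
    _ = ∫ u in Ioi (0:ℝ), Real.exp (-(α * u) - u ^ 2 / (2 * c ^ 2)) := by
        rw [smul_eq_mul, integral_const_mul, ← mul_assoc, inv_mul_cancel₀ hc.ne', one_mul]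

lemma Hmono (α : ℝ) (hα0 : 0 ≤ α) {c₁ c₂ : ℝ} (h1 : 0 < c₁) (h12 : c₁ < c₂) :
    (∫ u in Ioi (0:ℝ), Real.exp (-(α * u) - u ^ 2 / (2 * c₁ ^ 2))) <
    ∫ u in Ioi (0:ℝ), Real.exp (-(α * u) - u ^ 2 / (2 * c₂ ^ 2)) := by
  have h2 : 0 < c₂ := h1.trans h12
  have i1 := int_exp α (2 * c₁ ^ 2) hα0 (by positivity)
  have i2 := int_exp α (2 * c₂ ^ 2) hα0 (by positivity)
  rw [← sub_pos, ← integral_sub i2 i1]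
  have key : ∀ u ∈ Ioi (0:ℝ),
      0 < Real.exp (-(α * u) - u ^ 2 / (2 * c₂ ^ 2))
        - Real.exp (-(α * u) - u ^ 2 / (2 * c₁ ^ 2)) := by
    intro u hu
    have hq : u ^ 2 / (2 * c₂ ^ 2) < u ^ 2 / (2 * c₁ ^ 2) := by
      exact div_lt_div_of_pos_left (pow_pos hu 2) (by positivity) (by nlinarith)
    have := Real.exp_lt_exp.2 (show -(α * u) - u ^ 2 / (2 * c₁ ^ 2)
        < -(α * u) - u ^ 2 / (2 * c₂ ^ 2) by linarith)
    linarith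
  refine (setIntegral_pos_iff_support_of_nonneg_ae ?_ (i2.sub i1)).2 ?_
  · filter_upwards [ae_restrict_mem measurableSet_Ioi] with u hu
    exact (key u hu).le
  · have hsub : Ioi (0:ℝ) ⊆ Function.support (fun u =>
        Real.exp (-(α * u) - u ^ 2 / (2 * c₂ ^ 2))
          - Real.exp (-(α * u) - u ^ 2 / (2 * c₁ ^ 2))) ∩ Ioi 0 :=
      fun u hu => ⟨(key u hu).ne', hu⟩
    refine lt_of_lt_of_le ?_ (measure_mono hsub)
    simp [Real.volume_Ioi]

lemma Gcont (α : ℝ) (hα0 : 0 ≤ α) {c₀ : ℝ} (hc₀ : 0 < c₀) :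
    ContinuousAt (fun c => ∫ x in Ioi (0:ℝ), c * Real.exp (-(c * α * x) - x ^ 2 / 2)) c₀ := by
  apply continuousAt_of_dominated (bound := fun x => (c₀ + 1) * Real.exp (-(2:ℝ)⁻¹ * x ^ 2))
  · exact Eventually.of_forall fun c => (Continuous.aestronglyMeasurable (by fun_prop))
  · have hmem : Ioo (0:ℝ) (c₀ + 1) ∈ 𝓝 c₀ := Ioo_mem_nhds hc₀ (by linarith)
    filter_upwards [hmem] with c hc
    filter_upwards [ae_restrict_mem measurableSet_Ioi] with x hx
    rw [Real.norm_eq_abs, abs_mul, abs_of_pos hc.1, abs_of_nonneg (Real.exp_pos _).le]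
    have hexp : Real.exp (-(c * α * x) - x ^ 2 / 2) ≤ Real.exp (-(2:ℝ)⁻¹ * x ^ 2) := by
      apply Real.exp_le_exp.2
      have h1 : 0 ≤ c * α * x := mul_nonneg (mul_nonneg hc.1.le hα0) (le_of_lt hx)
      nlinarith
    exact mul_le_mul hc.2.le hexp (Real.exp_pos _).le (by linarith)
  · exact ((integrable_exp_neg_mul_sq (by norm_num : (0:ℝ) < 2⁻¹)).const_mul _).integrableOn
  · exact Eventually.of_forall fun x => (Continuous.continuousAt (by fun_prop))

lemma big (α : ℝ) (hα0 : 0 ≤ α) (hα1 : α < 1) :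
    ∃ b : ℝ, 1 ≤ b ∧ 1 < ∫ u in Ioi (0:ℝ), Real.exp (-(α * u) - u ^ 2 / (2 * b ^ 2)) := by
  set β : ℝ := (1 + α) / 2 with hβdef
  have hβ0 : 0 < β := by rw [hβdef]; linarith
  have hβ1 : β < 1 := by rw [hβdef]; linarith
  have hαβ : α ≤ β := by rw [hβdef]; linarith
  have hFint : IntegrableOn (fun u : ℝ => Real.exp (-(β * u))) (Ioi 0) := by
    simpa [neg_mul] using exp_neg_integrableOn_Ioi (0:ℝ) hβ0
  have hFval : (∫ u in Ioi (0:ℝ), Real.exp (-(β * u))) = β⁻¹ := by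
    have h := integral_comp_mul_left_Ioi (fun u => Real.exp (-u)) 0 hβ0
    simp only [mul_zero] at h
    rw [h, integral_exp_neg_Ioi_zero, smul_eq_mul, mul_one]
  have hmct := integral_tendsto_of_tendsto_of_monotone
      (μ := volume.restrict (Ioi 0))
      (f := fun (n : ℕ) u => Real.exp (-(β * u) - u ^ 2 / (2 * ((n:ℝ) + 1) ^ 2)))
      (F := fun u => Real.exp (-(β * u)))
      (fun n => int_exp β (2 * ((n:ℝ) + 1) ^ 2) hβ0.le (by positivity))
      hFint
      (Eventually.of_forall fun u => by
        intro n m hnm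
        apply Real.exp_le_exp.2
        have : u ^ 2 / (2 * ((m:ℝ) + 1) ^ 2) ≤ u ^ 2 / (2 * ((n:ℝ) + 1) ^ 2) := by
          gcongr
        linarith)
      (Eventually.of_forall fun u => by
        have hmono : ∀ n : ℕ, (n:ℝ) ≤ 2 * ((n:ℝ) + 1) ^ 2 := fun n => by
          nlinarith [show (0:ℝ) ≤ (n:ℝ) from Nat.cast_nonneg n]
        have hden : Tendsto (fun n : ℕ => 2 * ((n:ℝ) + 1) ^ 2) atTop atTop :=
          tendsto_atTop_mono hmono tendsto_natCast_atTop_atTop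
        have hq : Tendsto (fun n : ℕ => u ^ 2 / (2 * ((n:ℝ) + 1) ^ 2)) atTop (𝓝 0) :=
          Tendsto.div_atTop tendsto_const_nhds hden
        have harg := Tendsto.sub
          (tendsto_const_nhds : Tendsto (fun _ : ℕ => -(β * u)) atTop (𝓝 (-(β * u)))) hq
        rw [sub_zero] at harg
        exact (Real.continuous_exp.tendsto _).comp harg)
  rw [hFval] at hmct
  have h1β : 1 < β⁻¹ := ((one_lt_inv₀ hβ0).2 hβ1)
  obtain ⟨n, hn⟩ := (hmct.eventually_const_lt h1β).exists
  refine ⟨(n:ℝ) + 1, by simp [Nat.cast_nonneg], lt_of_lt_of_le hn ?_⟩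
  refine setIntegral_mono_on
    (int_exp β (2 * ((n:ℝ) + 1) ^ 2) hβ0.le (by positivity))
    (int_exp α (2 * ((n:ℝ) + 1) ^ 2) hα0 (by positivity))
    measurableSet_Ioi fun u hu => ?_
  apply Real.exp_le_exp.2
  have : α * u ≤ β * u := mul_le_mul_of_nonneg_right hαβ (le_of_lt hu)
  linarith

end SSPDaux

open SSPDaux

/-- For `α ∈ [0, 1)` there is a unique constant `c_α > 0` making
`x ↦ c_α exp(−c_α α x − x²/2)` a probability density on `(0, ∞)`, and the mean of the
resulting distribution equals `c_α (1 − α)`. -/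
theorem self_similar_profile_density (α : ℝ) (hα0 : 0 ≤ α) (hα1 : α < 1) :
    (∃! c : ℝ, 0 < c ∧
      (∫ x in Set.Ioi (0 : ℝ), c * Real.exp (-(c * α * x) - x ^ 2 / 2)) = 1) ∧
    (∀ c : ℝ, 0 < c →
      (∫ x in Set.Ioi (0 : ℝ), c * Real.exp (-(c * α * x) - x ^ 2 / 2)) = 1 →
      (∫ x in Set.Ioi (0 : ℝ), x * (c * Real.exp (-(c * α * x) - x ^ 2 / 2))) =
        c * (1 - α)) := by
  constructor
  · -- existence and uniqueness
    -- small value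
    set K : ℝ := ∫ x in Ioi (0:ℝ), Real.exp (-(0 * x) - x ^ 2 / 2) with hKdef
    have hK0 : 0 ≤ K := setIntegral_nonneg measurableSet_Ioi fun x _ => (Real.exp_pos _).le
    set a : ℝ := (K + 1)⁻¹ with hadef
    have ha0 : 0 < a := by positivity
    have ha1 : a ≤ 1 := by
      rw [hadef]
      apply inv_le_one_of_one_le₀
      linarith
    have hGa : (∫ x in Ioi (0:ℝ), a * Real.exp (-(a * α * x) - x ^ 2 / 2)) < 1 := by
      have hle : (∫ x in Ioi (0:ℝ), Real.exp (-(a * α * x) - x ^ 2 / 2)) ≤ K := by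
        rw [hKdef]
        refine setIntegral_mono_on (int_exp (a * α) 2 (by positivity) two_pos)
          (int_exp 0 2 le_rfl two_pos) measurableSet_Ioi fun x hx => ?_
        apply Real.exp_le_exp.2
        have : 0 ≤ a * α * x := mul_nonneg (mul_nonneg ha0.le hα0) (le_of_lt hx)
        nlinarith
      have : (∫ x in Ioi (0:ℝ), a * Real.exp (-(a * α * x) - x ^ 2 / 2))
          = a * ∫ x in Ioi (0:ℝ), Real.exp (-(a * α * x) - x ^ 2 / 2) :=
        integral_const_mul _ _
      rw [this]
      have hlt : a * K < 1 := by
        rw [hadef]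
        rw [inv_mul_lt_iff₀ (by linarith)]
        linarith
      calc a * (∫ x in Ioi (0:ℝ), Real.exp (-(a * α * x) - x ^ 2 / 2)) ≤ a * K :=
            mul_le_mul_of_nonneg_left hle ha0.le
        _ < 1 := hlt
    obtain ⟨b, hb1, hbH⟩ := big α hα0 hα1
    have hb0 : 0 < b := lt_of_lt_of_le one_pos hb1
    have hGb : 1 < ∫ x in Ioi (0:ℝ), b * Real.exp (-(b * α * x) - x ^ 2 / 2) := by
      rw [subst α b hb0]; exact hbH
    have hab : a ≤ b := ha1.trans hb1
    have hcont : ContinuousOn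
        (fun c => ∫ x in Ioi (0:ℝ), c * Real.exp (-(c * α * x) - x ^ 2 / 2)) (Icc a b) :=
      fun c hc => ((Gcont α hα0 (lt_of_lt_of_le ha0 hc.1)).continuousWithinAt)
    have hivt := intermediate_value_Icc hab hcont
    have h1mem : (1:ℝ) ∈ Icc
        (∫ x in Ioi (0:ℝ), a * Real.exp (-(a * α * x) - x ^ 2 / 2))
        (∫ x in Ioi (0:ℝ), b * Real.exp (-(b * α * x) - x ^ 2 / 2)) := ⟨hGa.le, hGb.le⟩
    obtain ⟨c, hcmem, hGc⟩ := hivt h1mem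
    replace hGc : (∫ x in Ioi (0:ℝ), c * Real.exp (-(c * α * x) - x ^ 2 / 2)) = 1 := hGc
    have hc0 : 0 < c := lt_of_lt_of_le ha0 hcmem.1
    refine ⟨c, ⟨hc0, hGc⟩, ?_⟩
    rintro c' ⟨hc'0, hGc'⟩
    by_contra hne
    have hH : (∫ u in Ioi (0:ℝ), Real.exp (-(α * u) - u ^ 2 / (2 * c' ^ 2)))
        = ∫ u in Ioi (0:ℝ), Real.exp (-(α * u) - u ^ 2 / (2 * c ^ 2)) := by
      rw [← subst α c' hc'0, ← subst α c hc0, hGc, hGc']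
    rcases lt_or_gt_of_ne hne with h | h
    · exact absurd hH (ne_of_lt (Hmono α hα0 hc'0 h))
    · exact absurd hH.symm (ne_of_lt (Hmono α hα0 hc0 h))
  · -- mean identity
    intro c hc hG
    have e1 : IntegrableOn (fun x => Real.exp (-(c * α * x) - x ^ 2 / 2)) (Ioi 0) :=
      int_exp (c * α) 2 (by positivity) two_pos
    have e2 : IntegrableOn (fun x => x * Real.exp (-(c * α * x) - x ^ 2 / 2)) (Ioi 0) :=
      int_xexp (c * α) 2 (by positivity) two_pos
    have hderiv : ∀ x ∈ Ici (0:ℝ), HasDerivAt (fun x => Real.exp (-(c * α * x) - x ^ 2 / 2))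
        ((-(c * α) - x) * Real.exp (-(c * α * x) - x ^ 2 / 2)) x := by
      intro x _
      have h1 : HasDerivAt (fun x : ℝ => -(c * α * x) - x ^ 2 / 2) (-(c * α) - x) x := by
        have ha : HasDerivAt (fun x : ℝ => c * α * x) (c * α) x := by
          simpa using (hasDerivAt_id x).const_mul (c * α)
        have hb : HasDerivAt (fun y : ℝ => y ^ 2 / 2) x x := by
          have := (hasDerivAt_pow 2 x).div_const 2
          simpa using this
        exact ha.neg.sub hb
      simpa [mul_comm] using h1.exp
    have hint' : IntegrableOn
        (fun x => (-(c * α) - x) * Real.exp (-(c * α * x) - x ^ 2 / 2)) (Ioi 0) := by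
      have h := ((e1.const_mul (-(c * α))).sub e2)
      refine h.congr (Eventually.of_forall fun x => ?_)
      simp only [Pi.sub_apply]
      ring
    have htop : Tendsto (fun x => Real.exp (-(c * α * x) - x ^ 2 / 2)) atTop (𝓝 0) := by
      have harg : Tendsto (fun x : ℝ => -(c * α * x) - x ^ 2 / 2) atTop atBot := by
        apply tendsto_atBot_mono' atTop ?_ tendsto_neg_atTop_atBot
        filter_upwards [eventually_ge_atTop (2:ℝ)] with x hx
        have h1 : 0 ≤ c * α * x := by positivity
        nlinarith
      exact Real.tendsto_exp_atBot.comp harg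
    have hFTC := integral_Ioi_of_hasDerivAt_of_tendsto' hderiv hint' htop
    have hF0 : Real.exp (-(c * α * 0) - 0 ^ 2 / 2) = 1 := by norm_num
    rw [hF0] at hFTC
    have hsplit : (∫ x in Ioi (0:ℝ), (-(c * α) - x) * Real.exp (-(c * α * x) - x ^ 2 / 2))
        = (-(c * α)) * (∫ x in Ioi (0:ℝ), Real.exp (-(c * α * x) - x ^ 2 / 2))
          - ∫ x in Ioi (0:ℝ), x * Real.exp (-(c * α * x) - x ^ 2 / 2) := by
      rw [← integral_const_mul, ← integral_sub (e1.const_mul _) e2]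
      exact setIntegral_congr_fun measurableSet_Ioi fun x _ => by ring
    have hGc : c * (∫ x in Ioi (0:ℝ), Real.exp (-(c * α * x) - x ^ 2 / 2)) = 1 := by
      rw [← integral_const_mul]; exact hG
    have hφ : (∫ x in Ioi (0:ℝ), Real.exp (-(c * α * x) - x ^ 2 / 2)) = c⁻¹ :=
      mul_left_cancel₀ hc.ne' (by rw [hGc, mul_inv_cancel₀ hc.ne'])
    rw [hsplit, hφ] at hFTC
    have hcc : c * c⁻¹ = 1 := mul_inv_cancel₀ hc.ne'
    have h3 : -(c * α) * c⁻¹ = -α := by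
      rw [show -(c * α) * c⁻¹ = -(α * (c * c⁻¹)) by ring, hcc]; ring
    have hmean : (∫ x in Ioi (0:ℝ), x * Real.exp (-(c * α * x) - x ^ 2 / 2)) = 1 - α := by
      rw [h3] at hFTC; linarith [hFTC]
    have : (∫ x in Ioi (0:ℝ), x * (c * Real.exp (-(c * α * x) - x ^ 2 / 2)))
        = c * ∫ x in Ioi (0:ℝ), x * Real.exp (-(c * α * x) - x ^ 2 / 2) := by
      rw [← integral_const_mul]
      exact setIntegral_congr_fun measurableSet_Ioi fun x _ => by ring
    rw [this, hmean]
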